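/- Let n ≥ 2 and 0 ≤ k < n be integers and 1 ≤ p, q < ∞. There exists a constant C = C(k,n) > 0 such that for every δ ∈ (0,1) with 1/(3δ) ∈ ℕ and every f ∈ L^p(ℝ^n): ‖M^k_δ f‖_{L^q(Q_0)} ≤ C · sup ‖M̃^k_{ρ,3δ} f‖_{L^q(Q_0)}, where the (finite) supremum is taken over all functions ρ : {x_1,…,x_u} → [1,2] ∩ 3δℤ on the centers of the grid of width 3δ and over all selections assigning to each i a k-face ℓ^i of S_k(x_i, ρ(x_i)), and M̃^k_{ρ,3δ} is the linearized maximal operator of width 3δ built from ρ and this selection. -/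

import Mathlib

open MeasureTheory Metric Set
open scoped ENNReal

noncomputable section

/-- A `k`-face of the axis-parallel cube in `ℝⁿ` with center `x` and side length `2r`:
the coordinates `j ∈ S` (with `#S = n - k`) are fixed at `x j ± r` (sign given by `ε j`),
the remaining coordinates range over `[x j - r, x j + r]`. -/
def kFace {n : ℕ} (x : Fin n → ℝ) (r : ℝ) (S : Finset (Fin n)) (ε : Fin n → Bool) :
    Set (Fin n → ℝ) :=
  {y | (∀ j ∈ S, y j = x j + (if ε j then r else -r)) ∧ ∀ j ∉ S, |y j - x j| ≤ r}

/-- The `k`-skeleton `S_k(x,r)` of the axis-parallel cube with center `x` and side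
length `2r`: the union of all its `k`-faces. -/
def skeleton (n k : ℕ) (x : Fin n → ℝ) (r : ℝ) : Set (Fin n → ℝ) :=
  ⋃ (S : Finset (Fin n)) (_ : S.card = n - k) (ε : Fin n → Bool), kFace x r S ε

/-- The `k`-skeleton maximal operator with width `δ`:
`M^k_δ f (x) = sup_{1 ≤ r ≤ 2} min_j ⨍_{S^j_{k,δ}(x,r)} |f|`, the minimum being taken
over all `k`-faces of the cube with center `x` and side length `2r`, each face thickened
by `δ` in the `ℓ∞` metric (which is the sup metric on `Fin n → ℝ`). -/
def skelMax (n k : ℕ) (δ : ℝ) (f : (Fin n → ℝ) → ℝ) (x : Fin n → ℝ) : ℝ :=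
  ⨆ r ∈ Set.Icc (1 : ℝ) 2,
    ⨅ (S : {S : Finset (Fin n) // S.card = n - k}) (ε : Fin n → Bool),
      ⨍ y in cthickening δ (kFace x r S.1 ε), |f y|

/-- The unit cube `Q₀ = [0,1)ⁿ`. -/
def Q0 (n : ℕ) : Set (Fin n → ℝ) := Set.univ.pi fun _ => Set.Ico (0 : ℝ) 1

/-- The cube `7Q₀`, concentric with `Q₀` and of side length `7`. -/
def sevenQ0 (n : ℕ) : Set (Fin n → ℝ) := Set.univ.pi fun _ => Set.Icc (-3 : ℝ) 4

/-- The translate by `v` of the coordinate `k`-plane spanned by the basis vectors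
`e_j`, `j ∈ π`. -/
def planeTranslate {n : ℕ} (π : Finset (Fin n)) (v : Fin n → ℝ) : Set (Fin n → ℝ) :=
  {y | ∀ j ∉ π, y j = v j}

/-- Center of the grid cube indexed by `z` in the grid of width `η` on `Q₀`. -/
def gridCenter {n : ℕ} (η : ℝ) {m : ℕ} (z : Fin n → Fin m) : Fin n → ℝ :=
  fun j => η * ((z j : ℝ) + 1 / 2)

/-- Index of the grid cube of width `η` containing `x` (for `x ∈ Q₀`). -/
def zOf {n : ℕ} (η : ℝ) {m : ℕ} (hm : 0 < m) (x : Fin n → ℝ) : Fin n → Fin m :=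
  fun j => ⟨(⌊x j / η⌋).toNat % m, Nat.mod_lt _ hm⟩

/-- The selected `k`-face `ℓᶻ` of the skeleton `S_k(x_z, ρ z)`, where `x_z` is the center
of the grid cube indexed by `z`. -/
def linFace {n : ℕ} (η : ℝ) {m : ℕ} (ρ : (Fin n → Fin m) → ℝ)
    (S : (Fin n → Fin m) → Finset (Fin n)) (ε : (Fin n → Fin m) → Fin n → Bool)
    (z : Fin n → Fin m) : Set (Fin n → ℝ) :=
  kFace (gridCenter η z) (ρ z) (S z) (ε z)

/-- The linearized `k`-skeleton maximal operator `M̃^k_{ρ,η}` of width `η`: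
for `x` in the grid cube indexed by `z`, it averages `|f|` over the closed
`η`-neighborhood (in the `ℓ∞` metric) of the selected face `ℓᶻ`. -/
def linMax {n : ℕ} (η : ℝ) {m : ℕ} (hm : 0 < m) (ρ : (Fin n → Fin m) → ℝ)
    (S : (Fin n → Fin m) → Finset (Fin n)) (ε : (Fin n → Fin m) → Fin n → Bool)
    (f : (Fin n → ℝ) → ℝ) (x : Fin n → ℝ) : ℝ :=
  ⨍ y in cthickening η (linFace η ρ S ε (zOf η hm x)), |f y|

/-- The overlap property for the selected faces: every affine translate `V` of a coordinate
`k`-plane `π` contains at most `C₀ · (#J)^{1 - (n-k)(2n-1)/(2n²)}` of the faces `ℓᶻ`, `z ∈ J`,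
whenever all the faces indexed by `J` are parallel to `π`. -/
def OverlapProp {n : ℕ} (k : ℕ) (η : ℝ) {m : ℕ} (ρ : (Fin n → Fin m) → ℝ)
    (S : (Fin n → Fin m) → Finset (Fin n)) (ε : (Fin n → Fin m) → Fin n → Bool)
    (C0 : ℝ) : Prop :=
  ∀ π : Finset (Fin n), π.card = k →
    ∀ J : Set (Fin n → Fin m),
      (∀ z ∈ J, ∃ v : Fin n → ℝ, linFace η ρ S ε z ⊆ planeTranslate π v) →
      ∀ v : Fin n → ℝ,
        ({z ∈ J | linFace η ρ S ε z ⊆ planeTranslate π v}).ncard ≤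
          C0 * (J.ncard : ℝ) ^ (1 - ((n : ℝ) - k) * (2 * (n : ℝ) - 1) / (2 * (n : ℝ) ^ 2))

/-- Abstract maximal averaging operator `T f (x) = sup_{r ∈ I} ⨍_{A_{x,r}} |f|`. -/
def absMax {n : ℕ} {I : Type*} (A : (Fin n → ℝ) → I → Set (Fin n → ℝ))
    (f : (Fin n → ℝ) → ℝ) (x : Fin n → ℝ) : ℝ :=
  ⨆ r : I, ⨍ y in A x r, |f y|

/-- `goodCount A E lam μ` says: for at least `m/2` of the indices `j`, the subset of
`A j ∩ E` where the multiplicity function `Υ = Σᵢ 1_{Aᵢ ∩ E}` is at most `μ` has measure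
at least `(lam/2)·|A j|`. -/
def goodCount {n m : ℕ} (A : Fin m → Set (Fin n → ℝ)) (E : Set (Fin n → ℝ))
    (lam : ℝ) (μ : ℕ) : Prop :=
  (m : ℝ) / 2 ≤
    ({j : Fin m | ENNReal.ofReal (lam / 2) * volume (A j) ≤
        volume {y ∈ A j ∩ E | ({i : Fin m | y ∈ A i ∩ E}).ncard ≤ μ}}).ncard
lemma kFace_isClosed {n : ℕ} (x : Fin n → ℝ) (r : ℝ) (S : Finset (Fin n)) (ε : Fin n → Bool) :
    IsClosed (kFace x r S ε) := by
  have : kFace x r S ε =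
      (⋂ j ∈ S, {y : Fin n → ℝ | y j = x j + (if ε j then r else -r)}) ∩
      (⋂ j ∈ (Sᶜ : Finset (Fin n)), {y : Fin n → ℝ | |y j - x j| ≤ r}) := by
    ext y
    simp [kFace, Set.mem_iInter, Finset.mem_compl]
  rw [this]
  refine IsClosed.inter ?_ ?_
  · refine isClosed_biInter fun j _ => ?_
    exact isClosed_eq (continuous_apply j) continuous_const
  · refine isClosed_biInter fun j _ => ?_
    have : Continuous fun y : Fin n → ℝ => |y j - x j| :=
      ((continuous_apply j).sub continuous_const).abs
    exact isClosed_le this continuous_const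

lemma kFace_nonempty {n : ℕ} (x : Fin n → ℝ) {r : ℝ} (hr : 0 ≤ r) (S : Finset (Fin n))
    (ε : Fin n → Bool) : (kFace x r S ε).Nonempty := by
  refine ⟨fun j => if j ∈ S then x j + (if ε j then r else -r) else x j, ?_, ?_⟩
  · intro j hj; simp [hj]
  · intro j hj; simp [hj, hr]

lemma exists_dist_le_of_mem_cthickening {n : ℕ} {s : Set (Fin n → ℝ)} {δ : ℝ} (hδ : 0 ≤ δ)
    (hs : IsClosed s) (hne : s.Nonempty) {y : Fin n → ℝ} (hy : y ∈ cthickening δ s) :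
    ∃ a ∈ s, dist y a ≤ δ := by
  obtain ⟨a, ha, hda⟩ := hs.exists_infDist_eq_dist hne y
  refine ⟨a, ha, ?_⟩
  rw [← hda]
  rw [mem_cthickening_iff] at hy
  have : infDist y s = (EMetric.infEdist y s).toReal := rfl
  rw [this]
  exact ENNReal.toReal_le_of_le_ofReal hδ hy

lemma cthickening_kFace_subset_pi {n : ℕ} (x : Fin n → ℝ) {r δ : ℝ} (hr : 0 ≤ r) (hδ : 0 ≤ δ)
    (S : Finset (Fin n)) (ε : Fin n → Bool) :
    cthickening δ (kFace x r S ε) ⊆ univ.pi (fun j =>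
      if j ∈ S then Icc (x j + (if ε j then r else -r) - δ) (x j + (if ε j then r else -r) + δ)
      else Icc (x j - (r + δ)) (x j + (r + δ))) := by
  intro y hy
  obtain ⟨a, ⟨haS, haF⟩, hda⟩ :=
    exists_dist_le_of_mem_cthickening hδ (kFace_isClosed x r S ε) (kFace_nonempty x hr S ε) hy
  intro j _
  have hj : |y j - a j| ≤ δ := by
    have := dist_le_pi_dist y a j
    rw [Real.dist_eq] at this
    linarith [hda]
  by_cases h : j ∈ S
  · simp only [h, if_pos]
    have := haS j h
    rw [this] at hj
    have h1 := (abs_le.mp hj).1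
    have h2 := (abs_le.mp hj).2
    exact ⟨by linarith, by linarith⟩
  · simp only [h, if_neg, not_false_iff]
    have h2 := haF j h
    have h3 := abs_le.mp hj
    have h4 := abs_le.mp h2
    exact ⟨by linarith [h3.1, h4.1], by linarith [h3.2, h4.2]⟩

lemma pi_subset_cthickening_kFace {n : ℕ} (x : Fin n → ℝ) {r δ : ℝ} (hr : 0 ≤ r) (hδ : 0 ≤ δ)
    (S : Finset (Fin n)) (ε : Fin n → Bool) :
    univ.pi (fun j =>
      if j ∈ S then Icc (x j + (if ε j then r else -r) - δ) (x j + (if ε j then r else -r) + δ)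
      else Icc (x j - r) (x j + r)) ⊆ cthickening δ (kFace x r S ε) := by
  intro y hy
  set a : Fin n → ℝ := fun j => if j ∈ S then x j + (if ε j then r else -r) else y j with ha
  have haF : a ∈ kFace x r S ε := by
    constructor
    · intro j hj; simp [ha, hj]
    · intro j hj
      have := hy j (mem_univ j)
      simp only [hj, if_neg, not_false_iff] at this
      simp only [ha, hj, if_neg, not_false_iff]
      rw [abs_le]; exact ⟨by linarith [this.1], by linarith [this.2]⟩
  refine mem_cthickening_of_dist_le y a δ _ haF ?_
  rw [dist_pi_le_iff hδ]
  intro j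
  rw [Real.dist_eq]
  by_cases h : j ∈ S
  · have := hy j (mem_univ j)
    simp only [h, if_pos] at this
    simp only [ha, h, if_pos]
    rw [abs_le]; exact ⟨by linarith [this.1], by linarith [this.2]⟩
  · simp [ha, h, hδ]


/-- The key inclusion: a `δ`-thickened face is contained in the `η`-thickened comparison
face if the coordinates match up to the stated tolerances. -/
lemma cthickening_kFace_subset_cthickening_kFace {n : ℕ} {x c : Fin n → ℝ} {r ρ δ η : ℝ}
    {S : Finset (Fin n)} {ε : Fin n → Bool}
    (hδ : 0 ≤ δ) (hr : 0 ≤ r) (hρ : 0 ≤ ρ) (hη : δ ≤ η)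
    (hfix : ∀ j ∈ S, |(x j + (if ε j then r else -r)) - (c j + (if ε j then ρ else -ρ))| ≤ η - δ)
    (hfree1 : ∀ j ∉ S, x j + r + δ ≤ c j + ρ + η)
    (hfree2 : ∀ j ∉ S, c j - ρ - η ≤ x j - r - δ) :
    cthickening δ (kFace x r S ε) ⊆ cthickening η (kFace c ρ S ε) := by
  intro y hy
  obtain ⟨a, ⟨haS, haF⟩, hda⟩ :=
    exists_dist_le_of_mem_cthickening hδ (kFace_isClosed x r S ε) (kFace_nonempty x hr S ε) hy
  have hcoord : ∀ j, |y j - a j| ≤ δ := by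
    intro j
    have := dist_le_pi_dist y a j
    rw [Real.dist_eq] at this
    linarith
  set b : Fin n → ℝ := fun j =>
    if j ∈ S then c j + (if ε j then ρ else -ρ) else max (c j - ρ) (min (y j) (c j + ρ)) with hb
  have hbF : b ∈ kFace c ρ S ε := by
    constructor
    · intro j hj; simp [hb, hj]
    · intro j hj
      simp only [hb, hj, if_neg, not_false_iff]
      rw [abs_le]
      constructor
      · have : c j - ρ ≤ max (c j - ρ) (min (y j) (c j + ρ)) := le_max_left _ _
        linarith
      · have h1 : min (y j) (c j + ρ) ≤ c j + ρ := min_le_right _ _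
        have h2 : max (c j - ρ) (min (y j) (c j + ρ)) ≤ c j + ρ := max_le (by linarith) h1
        linarith
  refine mem_cthickening_of_dist_le y b η _ hbF ?_
  rw [dist_pi_le_iff (le_trans hδ hη)]
  intro j
  rw [Real.dist_eq]
  by_cases h : j ∈ S
  · have h1 := hcoord j
    have h2 := haS j h
    have h3 := hfix j h
    simp only [hb, h, if_pos]
    have : y j - (c j + (if ε j then ρ else -ρ)) =
        (y j - a j) + ((x j + (if ε j then r else -r)) - (c j + (if ε j then ρ else -ρ))) := by
      rw [h2]; ring
    rw [this]
    calc |(y j - a j) + ((x j + (if ε j then r else -r)) - (c j + (if ε j then ρ else -ρ)))|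
        ≤ |y j - a j| + |(x j + (if ε j then r else -r)) - (c j + (if ε j then ρ else -ρ))| :=
          abs_add_le _ _
      _ ≤ δ + (η - δ) := add_le_add h1 h3
      _ = η := by ring
  · have h1 := hcoord j
    have h2 := abs_le.mp (haF j h)
    have h3 := hfree1 j h
    have h4 := hfree2 j h
    have hyu : y j ≤ c j + ρ + η := by
      have := abs_le.mp h1
      linarith [this.2, h2.2]
    have hyl : c j - ρ - η ≤ y j := by
      have := abs_le.mp h1
      linarith [this.1, h2.1]
    simp only [hb, h, if_neg, not_false_iff]
    rcases le_total (y j) (c j + ρ) with hc1 | hc1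
    · rcases le_total (c j - ρ) (y j) with hc2 | hc2
      · rw [min_eq_left hc1, max_eq_right hc2, sub_self, abs_zero]
        linarith
      · rw [min_eq_left hc1, max_eq_left hc2, abs_le]
        constructor <;> linarith
    · rw [min_eq_right hc1, max_eq_right (by linarith), abs_le]
      constructor <;> linarith

/-- Choose the `t` coordinates with largest weight. -/
lemma exists_top_finset {n : ℕ} (w : Fin n → ℝ) :
    ∀ t : ℕ, t ≤ n → ∃ T : Finset (Fin n), T.card = t ∧ ∀ i ∈ T, ∀ j ∉ T, w j ≤ w i := by
  intro t
  induction t with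
  | zero => intro _; exact ⟨∅, rfl, by simp⟩
  | succ t ih =>
    intro ht
    obtain ⟨T, hTcard, hT⟩ := ih (by omega)
    have hne : (Tᶜ : Finset (Fin n)).Nonempty := by
      rw [← Finset.card_pos, Finset.card_compl, Fintype.card_fin, hTcard]
      omega
    obtain ⟨j₀, hj₀mem, hj₀⟩ := Finset.exists_max_image (Tᶜ : Finset (Fin n)) w hne
    have hj₀T : j₀ ∉ T := Finset.mem_compl.mp hj₀mem
    refine ⟨insert j₀ T, ?_, ?_⟩
    · rw [Finset.card_insert_of_notMem hj₀T, hTcard]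
    · intro i hi j hj
      have hjT : j ∉ T := fun hjT => hj (Finset.mem_insert_of_mem hjT)
      rcases Finset.mem_insert.mp hi with rfl | hiT
      · exact hj₀ j (Finset.mem_compl.mpr hjT)
      · exact hT i hiT j hjT
    
lemma exists_S_b {n : ℕ} (w : Fin n → ℝ) (hw : ∀ j, 0 ≤ w j) (t : ℕ) (ht : t ≤ n) :
    ∃ (S : Finset (Fin n)) (b : ℝ), S.card = t ∧ 0 ≤ b ∧ (∀ j ∉ S, w j ≤ b) ∧
      (∀ i ∈ S, b ≤ w i) ∧ (b = 0 ∨ ∃ j, b = w j) := by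
  obtain ⟨S, hScard, hS⟩ := exists_top_finset w t ht
  by_cases hfull : Sᶜ = (∅ : Finset (Fin n))
  · refine ⟨S, 0, hScard, le_refl 0, ?_, fun i _ => hw i, Or.inl rfl⟩
    intro j hj
    exact absurd (Finset.mem_compl.mpr hj) (by simp [hfull])
  · obtain ⟨j₀, hj₀mem, hj₀⟩ := Finset.exists_max_image (Sᶜ : Finset (Fin n)) w
      (Finset.nonempty_iff_ne_empty.mpr hfull)
    refine ⟨S, w j₀, hScard, hw j₀, ?_, ?_, Or.inr ⟨j₀, rfl⟩⟩
    · intro j hj; exact hj₀ j (Finset.mem_compl.mpr hj)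
    · intro i hi; exact hS i hi j₀ (Finset.mem_compl.mp hj₀mem)

/-- Choice of the radius `ρ = 3δT`, a multiple of `3δ` in `[1,2]` close enough to `r`. -/
lemma exists_rho {δ r b : ℝ} {m : ℕ} (hδ : 0 < δ) (hm3 : 3 * δ * m = 1)
    (hr1 : 1 ≤ r) (hr2 : r ≤ 2) (hb0 : 0 ≤ b) (hb : b ≤ 3 * δ / 2) :
    ∃ T : ℤ, (m : ℤ) ≤ T ∧ T ≤ 2 * m ∧
      r - 3 * δ * T ≤ 2 * δ - b ∧ 3 * δ * T - r ≤ δ + b := by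
  have h3δ : 0 < 3 * δ := by linarith
  set c₀ : ℝ := max 1 (r - 2 * δ + b) with hc₀
  have hc₀1 : 1 ≤ c₀ := le_max_left _ _
  have hc₀2 : c₀ ≤ 2 := by
    apply max_le (by norm_num)
    linarith
  have hy2m : c₀ / (3 * δ) ≤ ((2 * m : ℤ) : ℝ) := by
    rw [div_le_iff₀ h3δ]
    push_cast
    nlinarith [hm3]
  have hyge : 3 * δ * (⌈c₀ / (3 * δ)⌉ : ℝ) ≥ c₀ := by
    have := Int.le_ceil (c₀ / (3 * δ))
    calc c₀ = (c₀ / (3 * δ)) * (3 * δ) := by field_simp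
      _ ≤ (⌈c₀ / (3 * δ)⌉ : ℝ) * (3 * δ) := by
          exact mul_le_mul_of_nonneg_right this (le_of_lt h3δ)
      _ = 3 * δ * (⌈c₀ / (3 * δ)⌉ : ℝ) := by ring
  refine ⟨⌈c₀ / (3 * δ)⌉, ?_, ?_, ?_, ?_⟩
  · -- m ≤ T
    have h1 : ((m : ℤ) : ℝ) ≤ (⌈c₀ / (3 * δ)⌉ : ℝ) := by
      have h2 : (m : ℝ) ≤ c₀ / (3 * δ) := by
        rw [le_div_iff₀ h3δ]
        nlinarith [hm3]
      push_cast
      linarith [Int.le_ceil (c₀ / (3 * δ))]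
    exact_mod_cast h1
  · -- T ≤ 2m
    exact Int.ceil_le.mpr hy2m
  · -- r - ρ ≤ 2δ - b
    have : r - 2 * δ + b ≤ c₀ := le_max_right _ _
    linarith [hyge]
  · -- ρ - r ≤ δ + b
    rcases le_total (r - 2 * δ + b) 1 with hcase | hcase
    · have hc : c₀ = 1 := max_eq_left hcase
      have hy : c₀ / (3 * δ) = ((m : ℤ) : ℝ) := by
        rw [hc, div_eq_iff (ne_of_gt h3δ)]
        push_cast
        linarith [hm3]
      have hT : ⌈c₀ / (3 * δ)⌉ = (m : ℤ) := by
        rw [hy, Int.ceil_intCast]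
      rw [hT]
      push_cast
      nlinarith [hm3]
    · have hc : c₀ = r - 2 * δ + b := max_eq_right hcase
      have := Int.ceil_lt_add_one (c₀ / (3 * δ))
      have h2 : 3 * δ * (⌈c₀ / (3 * δ)⌉ : ℝ) < c₀ + 3 * δ := by
        calc 3 * δ * (⌈c₀ / (3 * δ)⌉ : ℝ) < 3 * δ * (c₀ / (3 * δ) + 1) := by
              exact mul_lt_mul_of_pos_left this h3δ
          _ = c₀ + 3 * δ := by field_simp
      linarith [h2, hc.ge, hc.le]


lemma sign_bound {d e δ b : ℝ} (hδ : 0 < δ) (hd : |d| ≤ 3 * δ / 2) (hbd : b ≤ |d|)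
    (he1 : e ≤ 2 * δ - b) (he2 : -e ≤ δ + b) (hb0 : 0 ≤ b) :
    |d + (if d * e < 0 then e else -e)| ≤ 2 * δ := by
  rcases abs_cases d with ⟨hd1, hd2⟩ | ⟨hd1, hd2⟩ <;>
    rcases abs_cases e with ⟨he1', he2'⟩ | ⟨he1', he2'⟩ <;>
    split_ifs with h <;> rw [abs_le] <;> constructor <;> nlinarith

lemma setAverage_abs_nonneg {n : ℕ} (f : (Fin n → ℝ) → ℝ) (s : Set (Fin n → ℝ)) :
    0 ≤ ⨍ y in s, |f y| := by
  rw [setAverage_eq, smul_eq_mul]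
  exact mul_nonneg (inv_nonneg.mpr ENNReal.toReal_nonneg)
    (integral_nonneg fun y => abs_nonneg _)

lemma avg_le_avg {n : ℕ} {f : (Fin n → ℝ) → ℝ} {s t : Set (Fin n → ℝ)} {a₀ b₀ C : ℝ}
    (hsub : s ⊆ t) (ha₀ : 0 < a₀) (hs : ENNReal.ofReal a₀ ≤ volume s)
    (ht : volume t ≤ ENNReal.ofReal b₀) (hC : b₀ ≤ C * a₀)
    (hint : IntegrableOn (fun y => |f y|) t) :
    ⨍ y in s, |f y| ≤ C * ⨍ y in t, |f y| := by
  have htfin : volume t ≠ ⊤ := (lt_of_le_of_lt ht ENNReal.ofReal_lt_top).ne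
  have hsfin : volume s ≠ ⊤ := (lt_of_le_of_lt (measure_mono hsub)
    (lt_of_le_of_lt ht ENNReal.ofReal_lt_top)).ne
  set A := (volume s).toReal with hA'
  set B := (volume t).toReal with hB'
  have hA : a₀ ≤ A := (ENNReal.ofReal_le_iff_le_toReal hsfin).mp hs
  have hAB : A ≤ B := ENNReal.toReal_mono htfin (measure_mono hsub)
  have hb₀ : 0 ≤ b₀ := by
    by_contra hb
    push_neg at hb
    have : volume t = 0 := le_antisymm (ht.trans (by rw [ENNReal.ofReal_eq_zero.mpr hb.le]))
      (zero_le)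
    have hB0 : B = 0 := by rw [hB', this, ENNReal.toReal_zero]
    linarith
  have hB : B ≤ b₀ := ENNReal.toReal_le_of_le_ofReal hb₀ ht
  have hA0 : 0 < A := lt_of_lt_of_le ha₀ hA
  have hB0 : 0 < B := lt_of_lt_of_le hA0 hAB
  have hC0 : 0 < C := by nlinarith
  have hI : ∫ y in s, |f y| ≤ ∫ y in t, |f y| :=
    setIntegral_mono_set hint (Filter.Eventually.of_forall fun y => abs_nonneg _)
      (HasSubset.Subset.eventuallyLE hsub)
  have hI2 : 0 ≤ ∫ y in t, |f y| := integral_nonneg fun y => abs_nonneg _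
  rw [setAverage_eq, setAverage_eq, smul_eq_mul, smul_eq_mul, measureReal_def, measureReal_def, ← hA', ← hB']
  calc A⁻¹ * ∫ y in s, |f y| ≤ A⁻¹ * ∫ y in t, |f y| :=
        mul_le_mul_of_nonneg_left hI (inv_nonneg.mpr hA0.le)
    _ ≤ (C * B⁻¹) * ∫ y in t, |f y| := by
        refine mul_le_mul_of_nonneg_right ?_ hI2
        rw [inv_eq_one_div, inv_eq_one_div, mul_one_div, div_le_div_iff₀ hA0 hB0]
        nlinarith
    _ = C * (B⁻¹ * (∫ y in t, |f y|)) := by ring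

lemma prod_ite_bound {n : ℕ} (S : Finset (Fin n)) (a b : ℝ≥0∞) :
    (∏ j : Fin n, if j ∈ S then a else b) = a ^ S.card * b ^ (n - S.card) := by
  rw [Finset.prod_ite, Finset.prod_const, Finset.prod_const]
  congr 2
  · exact congrArg Finset.card (Finset.filter_univ_mem S)
  · have h : Finset.filter (fun x => x ∉ S) Finset.univ = Sᶜ := by
      ext j; simp
    rw [h, Finset.card_compl, Fintype.card_fin]

lemma volume_box_le {n : ℕ} (S : Finset (Fin n)) (I : Fin n → Set ℝ) {a b : ℝ}
    (ha : 0 ≤ a) (hb : 0 ≤ b)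
    (hfix : ∀ j ∈ S, volume (I j) ≤ ENNReal.ofReal a)
    (hfree : ∀ j ∉ S, volume (I j) ≤ ENNReal.ofReal b) :
    volume (univ.pi I) ≤ ENNReal.ofReal (a ^ S.card * b ^ (n - S.card)) := by
  rw [volume_pi_pi]
  calc (∏ j : Fin n, volume (I j))
      ≤ ∏ j : Fin n, (if j ∈ S then ENNReal.ofReal a else ENNReal.ofReal b) := by
        refine Finset.prod_le_prod' fun j _ => ?_
        by_cases h : j ∈ S
        · simpa [h] using hfix j h
        · simpa [h] using hfree j h
    _ = ENNReal.ofReal a ^ S.card * ENNReal.ofReal b ^ (n - S.card) := prod_ite_bound S _ _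
    _ = ENNReal.ofReal (a ^ S.card * b ^ (n - S.card)) := by
        rw [← ENNReal.ofReal_pow ha, ← ENNReal.ofReal_pow hb,
          ← ENNReal.ofReal_mul (pow_nonneg ha _)]

lemma le_volume_box {n : ℕ} (S : Finset (Fin n)) (I : Fin n → Set ℝ) {a b : ℝ}
    (ha : 0 ≤ a) (hb : 0 ≤ b)
    (hfix : ∀ j ∈ S, ENNReal.ofReal a ≤ volume (I j))
    (hfree : ∀ j ∉ S, ENNReal.ofReal b ≤ volume (I j)) :
    ENNReal.ofReal (a ^ S.card * b ^ (n - S.card)) ≤ volume (univ.pi I) := by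
  rw [volume_pi_pi]
  calc ENNReal.ofReal (a ^ S.card * b ^ (n - S.card))
      = ENNReal.ofReal a ^ S.card * ENNReal.ofReal b ^ (n - S.card) := by
        rw [← ENNReal.ofReal_pow ha, ← ENNReal.ofReal_pow hb,
          ← ENNReal.ofReal_mul (pow_nonneg ha _)]
    _ = ∏ j : Fin n, (if j ∈ S then ENNReal.ofReal a else ENNReal.ofReal b) :=
        (prod_ite_bound S _ _).symm
    _ ≤ ∏ j : Fin n, volume (I j) := by
        refine Finset.prod_le_prod' fun j _ => ?_
        by_cases h : j ∈ S
        · simpa [h] using hfix j h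
        · simpa [h] using hfree j h

lemma grid_dist {n : ℕ} {η : ℝ} (hη : 0 < η) {m : ℕ} (hm : 0 < m) (hηm : η * m = 1)
    {x : Fin n → ℝ} (hx : x ∈ Q0 n) (j : Fin n) :
    |x j - gridCenter η (zOf η hm x) j| ≤ η / 2 := by
  have hxj := hx j (mem_univ j)
  simp only [mem_Ico] at hxj
  set y := x j / η with hy
  have hy0 : 0 ≤ y := div_nonneg hxj.1 hη.le
  have hym : y < m := by
    rw [hy, div_lt_iff₀ hη]
    calc x j < 1 := hxj.2
      _ = η * m := hηm.symm
      _ = (m : ℝ) * η := by ring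
  have hfl0 : 0 ≤ ⌊y⌋ := Int.floor_nonneg.mpr hy0
  have hflm : ⌊y⌋ < (m : ℤ) := Int.floor_lt.mpr (by exact_mod_cast hym)
  have htn : (⌊y⌋).toNat < m := by omega
  have hcast : ((zOf η hm x j : Fin m) : ℝ) = (⌊y⌋ : ℝ) := by
    have : ((zOf η hm x j : Fin m) : ℕ) = (⌊y⌋).toNat := by
      simp only [zOf]
      exact Nat.mod_eq_of_lt htn
    rw [show ((zOf η hm x j : Fin m) : ℝ) = (((zOf η hm x j : Fin m) : ℕ) : ℝ) from rfl, this]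
    exact_mod_cast congrArg Int.cast (Int.toNat_of_nonneg hfl0)
  have hxje : x j = η * y := by rw [hy]; field_simp
  rw [gridCenter, hcast, hxje]
  have h1 : (⌊y⌋ : ℝ) ≤ y := Int.floor_le y
  have h2 : y < (⌊y⌋ : ℝ) + 1 := Int.lt_floor_add_one y
  rw [abs_le]
  constructor <;> nlinarith


set_option maxHeartbeats 2000000 in
/-- Lemma 2.6 of OS18: domination of `M^k_δ` by the linearized operators.
For `n ≥ 2`, `0 ≤ k < n` and `1 ≤ p, q < ∞`, there is `C = C(k,n) > 0` such that for every
`δ ∈ (0,1)` with `1/(3δ) = m ∈ ℕ` and every `f ∈ L^p(ℝⁿ)`,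
`‖M^k_δ f‖_{L^q(Q₀)} ≤ C · sup_{ρ, face selection} ‖M̃^k_{ρ,3δ} f‖_{L^q(Q₀)}`,
the supremum being over all `ρ : {x_1,…,x_u} → [1,2] ∩ 3δℤ` on the centers of the grid of
width `3δ` and all selections of one `k`-face of each skeleton `S_k(x_i, ρ(x_i))`. -/
theorem skelMax_le_sup_linMax (n k : ℕ) (hn : 2 ≤ n) (hk : k < n)
    (p q : ℝ) (hp : 1 ≤ p) (hq : 1 ≤ q) :
    ∃ C > 0, ∀ δ ∈ Set.Ioo (0 : ℝ) 1, ∀ (m : ℕ) (hm : 0 < m), 3 * δ * m = 1 →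
      ∀ f : (Fin n → ℝ) → ℝ, MemLp f (ENNReal.ofReal p) volume →
      eLpNorm (skelMax n k δ f) (ENNReal.ofReal q) (volume.restrict (Q0 n)) ≤
        ENNReal.ofReal C *
          ⨆ (ρ : (Fin n → Fin m) → ℝ)
            (_ : ∀ z, ρ z ∈ Set.Icc (1 : ℝ) 2 ∧ ∃ t : ℤ, ρ z = 3 * δ * t)
            (S : (Fin n → Fin m) → Finset (Fin n)) (_ : ∀ z, (S z).card = n - k)
            (ε : (Fin n → Fin m) → Fin n → Bool),
            eLpNorm (linMax (3 * δ) hm ρ S ε f) (ENNReal.ofReal q)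
              (volume.restrict (Q0 n)) := by
  refine ⟨15 ^ n, by positivity, ?_⟩
  rintro δ ⟨hδ0, hδ1⟩ m hm h3δm f hf
  have hk' : k ≤ n := hk.le
  have hη0 : (0:ℝ) < 3 * δ := by linarith
  have hq' : (1:ℝ≥0∞) ≤ ENNReal.ofReal q := by
    rw [show (1:ℝ≥0∞) = ENNReal.ofReal 1 from (ENNReal.ofReal_one).symm]
    exact ENNReal.ofReal_le_ofReal hq
  -- the face-selection index type
  obtain ⟨Sex, -, hSex⟩ := Finset.exists_subset_card_eq
    (show n - k ≤ (Finset.univ : Finset (Fin n)).card by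
      rw [Finset.card_univ, Fintype.card_fin]; omega)
  haveI : Nonempty {S : Finset (Fin n) // S.card = n - k} := ⟨⟨Sex, hSex⟩⟩
  set I := Fin (m + 1) × {S : Finset (Fin n) // S.card = n - k} × (Fin n → Bool) with hI
  haveI : Nonempty I := by
    refine ⟨⟨⟨0, by omega⟩, Classical.arbitrary _, fun _ => true⟩⟩
  set F : (Fin n → Fin m) → I → ℝ := fun z i =>
    ⨍ y in cthickening (3 * δ)
      (kFace (gridCenter (3 * δ) z) (3 * δ * ((m : ℝ) + (i.1 : ℕ))) i.2.1.1 i.2.2), |f y|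
    with hF
  have hsel' : ∀ z : Fin n → Fin m, ∃ i : I, ∀ i', F z i' ≤ F z i :=
    fun z => Finite.exists_max (F z)
  choose sel hsel using hsel'
  set ρ' : (Fin n → Fin m) → ℝ := fun z => 3 * δ * ((m : ℝ) + ((sel z).1 : ℕ)) with hρ'
  set S' : (Fin n → Fin m) → Finset (Fin n) := fun z => (sel z).2.1.1 with hS'
  set ε' : (Fin n → Fin m) → Fin n → Bool := fun z => (sel z).2.2 with hε'
  have hS'card : ∀ z, (S' z).card = n - k := fun z => (sel z).2.1.2
  have hρ'mem : ∀ z, ρ' z ∈ Set.Icc (1:ℝ) 2 ∧ ∃ t : ℤ, ρ' z = 3 * δ * t := by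
    intro z
    have h1 : ((sel z).1 : ℕ) ≤ m := by omega
    constructor
    · constructor
      · have : (1:ℝ) = 3 * δ * ((m:ℝ) + 0) := by rw [add_zero]; linarith [h3δm]
        rw [this]
        apply mul_le_mul_of_nonneg_left _ hη0.le
        have : (0:ℝ) ≤ ((sel z).1 : ℕ) := Nat.cast_nonneg _
        linarith
      · have h2 : (m:ℝ) + ((sel z).1 : ℕ) ≤ 2 * m := by
          have : (((sel z).1 : ℕ) : ℝ) ≤ (m : ℝ) := Nat.cast_le.mpr h1
          linarith
        calc ρ' z ≤ 3 * δ * (2 * m) := mul_le_mul_of_nonneg_left h2 hη0.le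
          _ = 2 := by nlinarith [h3δm]
    · exact ⟨(m : ℤ) + ((sel z).1 : ℕ), by push_cast; ring⟩
  have hlin : ∀ x, linMax (3 * δ) hm ρ' S' ε' f x = F (zOf (3 * δ) hm x) (sel (zOf (3 * δ) hm x)) :=
    fun x => rfl
  -- pointwise domination
  have key : ∀ x ∈ Q0 n, skelMax n k δ f x ≤ 15 ^ n * linMax (3 * δ) hm ρ' S' ε' f x := by
    intro x hx
    set z := zOf (3 * δ) hm x with hz
    set c := gridCenter (3 * δ) z with hc
    have hd : ∀ j, |x j - c j| ≤ 3 * δ / 2 := by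
      intro j
      have := grid_dist hη0 hm h3δm hx j
      linarith [this]
    have hRHS : 0 ≤ linMax (3 * δ) hm ρ' S' ε' f x := setAverage_abs_nonneg f _
    have hgoalnn : 0 ≤ 15 ^ n * linMax (3 * δ) hm ρ' S' ε' f x := by positivity
    unfold skelMax
    apply Real.iSup_le _ hgoalnn
    intro r
    apply Real.iSup_le _ hgoalnn
    intro hr
    obtain ⟨hr1, hr2⟩ := hr
    -- choose S₀, b
    obtain ⟨S₀, b, hS₀card, hb0, hbfree, hbfix, hbform⟩ :=
      exists_S_b (fun j => |x j - c j|) (fun j => abs_nonneg _) (n - k) (Nat.sub_le n k)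
    have hb32 : b ≤ 3 * δ / 2 := by
      rcases hbform with rfl | ⟨j, rfl⟩
      · linarith
      · exact hd j
    obtain ⟨T, hTm, hT2m, hTe1, hTe2⟩ := exists_rho hδ0 h3δm hr1 hr2 hb0 hb32
    set ρ := 3 * δ * (T : ℝ) with hρdef
    have hρ1 : (1:ℝ) ≤ ρ := by
      have : ((m:ℤ):ℝ) ≤ (T:ℝ) := Int.cast_le.mpr hTm
      push_cast at this
      nlinarith [h3δm]
    have hρ2 : ρ ≤ 2 := by
      have : (T:ℝ) ≤ ((2 * m : ℤ):ℝ) := Int.cast_le.mpr hT2m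
      push_cast at this
      nlinarith [h3δm]
    set ε₀ : Fin n → Bool := fun j => decide ((x j - c j) * (r - ρ) < 0) with hε₀
    -- the coordinatewise estimates
    have hfix : ∀ j ∈ S₀,
        |(x j + (if ε₀ j then r else -r)) - (c j + (if ε₀ j then ρ else -ρ))| ≤ 2 * δ := by
      intro j hj
      have heq : (x j + (if ε₀ j then r else -r)) - (c j + (if ε₀ j then ρ else -ρ)) =
          (x j - c j) + (if (x j - c j) * (r - ρ) < 0 then (r - ρ) else -(r - ρ)) := by
        simp only [hε₀, decide_eq_true_eq]
        split_ifs <;> ring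
      rw [heq]
      exact sign_bound hδ0 (hd j) (hbfix j hj) hTe1 (by linarith [hTe2]) hb0
    have hfree1 : ∀ j ∉ S₀, x j + r + δ ≤ c j + ρ + 3 * δ := by
      intro j hj
      have h1 := hbfree j hj
      have h4 : x j - c j ≤ |x j - c j| := le_abs_self _
      linarith [hTe1]
    have hfree2 : ∀ j ∉ S₀, c j - ρ - 3 * δ ≤ x j - r - δ := by
      intro j hj
      have h1 := hbfree j hj
      have h4 : -(x j - c j) ≤ |x j - c j| := neg_le_abs _
      linarith
    -- the two thickened faces
    set small := cthickening δ (kFace x r S₀ ε₀) with hsmalldef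
    set big := cthickening (3 * δ) (kFace c ρ S₀ ε₀) with hbigdef
    have hsub : small ⊆ big := by
      apply cthickening_kFace_subset_cthickening_kFace hδ0.le (by linarith) (by linarith)
        (by linarith)
      · intro j hj
        have := hfix j hj
        linarith [this]
      · exact hfree1
      · exact hfree2
    -- volume bounds
    have hcd : n - S₀.card = k := by omega
    have hbig : volume big ≤ ENNReal.ofReal ((6 * δ) ^ (n - k) * 10 ^ k) := by
      rw [← hS₀card, ← hcd]
      refine le_trans (measure_mono
        (cthickening_kFace_subset_pi c (by linarith : (0:ℝ) ≤ ρ) hη0.le S₀ ε₀)) ?_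
      refine volume_box_le S₀ _ (by linarith) (by norm_num) ?_ ?_
      · intro j hj
        simp only [hj, if_pos]
        rw [Real.volume_Icc]
        apply ENNReal.ofReal_le_ofReal
        ring_nf
        linarith
      · intro j hj
        simp only [hj, if_neg, not_false_iff]
        rw [Real.volume_Icc]
        apply ENNReal.ofReal_le_ofReal
        linarith
    have hsmall : ENNReal.ofReal ((2 * δ) ^ (n - k) * 2 ^ k) ≤ volume small := by
      rw [← hS₀card, ← hcd]
      refine le_trans ?_ (measure_mono
        (pi_subset_cthickening_kFace x (by linarith : (0:ℝ) ≤ r) hδ0.le S₀ ε₀))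
      refine le_volume_box S₀ _ (by linarith) (by norm_num) ?_ ?_
      · intro j hj
        simp only [hj, if_pos]
        rw [Real.volume_Icc]
        apply ENNReal.ofReal_le_ofReal
        ring_nf
        linarith
      · intro j hj
        simp only [hj, if_neg, not_false_iff]
        rw [Real.volume_Icc]
        apply ENNReal.ofReal_le_ofReal
        linarith
    -- integrability on big
    have hbigfin : volume big < ⊤ := lt_of_le_of_lt hbig ENNReal.ofReal_lt_top
    have hint : IntegrableOn (fun y => |f y|) big volume := by
      haveI : IsFiniteMeasure (volume.restrict big) :=
        ⟨by rwa [Measure.restrict_apply_univ]⟩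
      have h1 : MemLp f (ENNReal.ofReal p) (volume.restrict big) := hf.restrict big
      have h2 : MemLp f 1 (volume.restrict big) := by
        refine h1.mono_exponent ?_
        rw [show (1:ℝ≥0∞) = ENNReal.ofReal 1 from (ENNReal.ofReal_one).symm]
        exact ENNReal.ofReal_le_ofReal hp
      exact (memLp_one_iff_integrable.mp h2).abs
    -- the average comparison
    have hCineq : (6 * δ) ^ (n - k) * 10 ^ k ≤ 15 ^ n * ((2 * δ) ^ (n - k) * 2 ^ k) := by
      have h35 : (3:ℝ) ^ (n - k) * 5 ^ k ≤ 15 ^ n := by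
        calc (3:ℝ) ^ (n - k) * 5 ^ k ≤ 15 ^ (n - k) * 15 ^ k := by
              gcongr <;> norm_num
          _ = 15 ^ n := by rw [← pow_add]; congr 1; omega
      have hX : (0:ℝ) ≤ (2 * δ) ^ (n - k) * 2 ^ k := by positivity
      calc (6 * δ) ^ (n - k) * 10 ^ k
          = (3 ^ (n - k) * 5 ^ k) * ((2 * δ) ^ (n - k) * 2 ^ k) := by
            rw [show (6 * δ : ℝ) = 3 * (2 * δ) from by ring, mul_pow,
              show (10:ℝ) ^ k = 5 ^ k * 2 ^ k from by rw [← mul_pow]; norm_num]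
            ring
        _ ≤ 15 ^ n * ((2 * δ) ^ (n - k) * 2 ^ k) := mul_le_mul_of_nonneg_right h35 hX
    have havg : ⨍ y in small, |f y| ≤ 15 ^ n * ⨍ y in big, |f y| :=
      avg_le_avg hsub (by positivity) hsmall hbig hCineq hint
    -- identify the big average with a linearized-operator candidate
    have hTnat : (((T - (m:ℤ)).toNat : ℕ) : ℝ) = (T : ℝ) - (m : ℝ) := by
      have h1 : ((T - (m:ℤ)).toNat : ℤ) = T - m := Int.toNat_of_nonneg (by omega)
      exact_mod_cast h1
    have hTlt : (T - (m:ℤ)).toNat < m + 1 := by omega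
    set i₀ : I := ⟨⟨(T - (m:ℤ)).toNat, hTlt⟩, ⟨S₀, hS₀card⟩, ε₀⟩ with hi₀
    have hFi₀ : F z i₀ = ⨍ y in big, |f y| := by
      have hrad : 3 * δ * ((m : ℝ) + (((T - (m:ℤ)).toNat : ℕ) : ℝ)) = ρ := by
        rw [hTnat, hρdef]; ring
      simp only [hF, hi₀]
      rw [hrad]
    -- conclude
    have hstep : (⨅ (S : {S : Finset (Fin n) // S.card = n - k}) (ε : Fin n → Bool),
        ⨍ y in cthickening δ (kFace x r S.1 ε), |f y|) ≤ ⨍ y in small, |f y| := by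
      have hBdd1 : BddBelow (Set.range fun S : {S : Finset (Fin n) // S.card = n - k} =>
          ⨅ ε : Fin n → Bool, ⨍ y in cthickening δ (kFace x r S.1 ε), |f y|) := by
        refine ⟨0, ?_⟩
        rintro v ⟨S, rfl⟩
        exact Real.iInf_nonneg fun ε => setAverage_abs_nonneg f _
      refine le_trans (ciInf_le hBdd1 ⟨S₀, hS₀card⟩) ?_
      refine ciInf_le ⟨0, ?_⟩ ε₀
      rintro v ⟨ε, rfl⟩
      exact setAverage_abs_nonneg f _
    calc (⨅ (S : {S : Finset (Fin n) // S.card = n - k}) (ε : Fin n → Bool),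
        ⨍ y in cthickening δ (kFace x r S.1 ε), |f y|)
        ≤ ⨍ y in small, |f y| := hstep
      _ ≤ 15 ^ n * ⨍ y in big, |f y| := havg
      _ = 15 ^ n * F z i₀ := by rw [hFi₀]
      _ ≤ 15 ^ n * F z (sel z) :=
          mul_le_mul_of_nonneg_left (hsel z i₀) (by positivity)
      _ = 15 ^ n * linMax (3 * δ) hm ρ' S' ε' f x := by rw [hlin x]
  -- pass to L^q norms
  have hQ0meas : MeasurableSet (Q0 n) := MeasurableSet.univ_pi fun j => measurableSet_Ico
  have hskelnn : ∀ x, 0 ≤ skelMax n k δ f x := by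
    intro x
    apply Real.iSup_nonneg
    intro r
    apply Real.iSup_nonneg
    intro hr
    exact Real.iInf_nonneg fun S => Real.iInf_nonneg fun ε => setAverage_abs_nonneg f _
  have hstep1 : eLpNorm (skelMax n k δ f) (ENNReal.ofReal q) (volume.restrict (Q0 n)) ≤
      eLpNorm (fun x => (15:ℝ) ^ n * linMax (3 * δ) hm ρ' S' ε' f x) (ENNReal.ofReal q)
        (volume.restrict (Q0 n)) := by
    apply eLpNorm_mono_ae
    rw [ae_restrict_iff' hQ0meas]
    refine Filter.Eventually.of_forall fun x hx => ?_
    rw [Real.norm_eq_abs, Real.norm_eq_abs, abs_of_nonneg (hskelnn x)]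
    exact le_trans (key x hx) (le_abs_self _)
  have hstep2 : eLpNorm (fun x => (15:ℝ) ^ n * linMax (3 * δ) hm ρ' S' ε' f x)
      (ENNReal.ofReal q) (volume.restrict (Q0 n)) =
      ENNReal.ofReal (15 ^ n) *
        eLpNorm (linMax (3 * δ) hm ρ' S' ε' f) (ENNReal.ofReal q) (volume.restrict (Q0 n)) := by
    have heq : (fun x => (15:ℝ) ^ n * linMax (3 * δ) hm ρ' S' ε' f x) =
        ((15:ℝ) ^ n) • (linMax (3 * δ) hm ρ' S' ε' f) := rfl
    rw [heq, eLpNorm_const_smul, Real.enorm_eq_ofReal (by positivity)]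
  have hstep3 : eLpNorm (linMax (3 * δ) hm ρ' S' ε' f) (ENNReal.ofReal q)
      (volume.restrict (Q0 n)) ≤
      ⨆ (ρ : (Fin n → Fin m) → ℝ)
        (_ : ∀ z, ρ z ∈ Set.Icc (1 : ℝ) 2 ∧ ∃ t : ℤ, ρ z = 3 * δ * t)
        (S : (Fin n → Fin m) → Finset (Fin n)) (_ : ∀ z, (S z).card = n - k)
        (ε : (Fin n → Fin m) → Fin n → Bool),
        eLpNorm (linMax (3 * δ) hm ρ S ε f) (ENNReal.ofReal q) (volume.restrict (Q0 n)) := by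
    calc eLpNorm (linMax (3 * δ) hm ρ' S' ε' f) (ENNReal.ofReal q) (volume.restrict (Q0 n))
        ≤ ⨆ (ε : (Fin n → Fin m) → Fin n → Bool),
            eLpNorm (linMax (3 * δ) hm ρ' S' ε f) (ENNReal.ofReal q)
              (volume.restrict (Q0 n)) :=
          le_iSup (fun ε => eLpNorm (linMax (3 * δ) hm ρ' S' ε f) (ENNReal.ofReal q)
            (volume.restrict (Q0 n))) ε'
      _ ≤ ⨆ (_ : ∀ z, (S' z).card = n - k) (ε : (Fin n → Fin m) → Fin n → Bool),
            eLpNorm (linMax (3 * δ) hm ρ' S' ε f) (ENNReal.ofReal q)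
              (volume.restrict (Q0 n)) :=
          le_iSup (fun _ : ∀ z, (S' z).card = n - k =>
            ⨆ (ε : (Fin n → Fin m) → Fin n → Bool),
              eLpNorm (linMax (3 * δ) hm ρ' S' ε f) (ENNReal.ofReal q)
                (volume.restrict (Q0 n))) hS'card
      _ ≤ ⨆ (S : (Fin n → Fin m) → Finset (Fin n)) (_ : ∀ z, (S z).card = n - k)
            (ε : (Fin n → Fin m) → Fin n → Bool),
            eLpNorm (linMax (3 * δ) hm ρ' S ε f) (ENNReal.ofReal q)
              (volume.restrict (Q0 n)) :=
          le_iSup (fun S : (Fin n → Fin m) → Finset (Fin n) =>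
            ⨆ (_ : ∀ z, (S z).card = n - k) (ε : (Fin n → Fin m) → Fin n → Bool),
              eLpNorm (linMax (3 * δ) hm ρ' S ε f) (ENNReal.ofReal q)
                (volume.restrict (Q0 n))) S'
      _ ≤ ⨆ (_ : ∀ z, ρ' z ∈ Set.Icc (1 : ℝ) 2 ∧ ∃ t : ℤ, ρ' z = 3 * δ * t)
            (S : (Fin n → Fin m) → Finset (Fin n)) (_ : ∀ z, (S z).card = n - k)
            (ε : (Fin n → Fin m) → Fin n → Bool),
            eLpNorm (linMax (3 * δ) hm ρ' S ε f) (ENNReal.ofReal q)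
              (volume.restrict (Q0 n)) :=
          le_iSup (fun _ : ∀ z, ρ' z ∈ Set.Icc (1 : ℝ) 2 ∧ ∃ t : ℤ, ρ' z = 3 * δ * t =>
            ⨆ (S : (Fin n → Fin m) → Finset (Fin n)) (_ : ∀ z, (S z).card = n - k)
              (ε : (Fin n → Fin m) → Fin n → Bool),
              eLpNorm (linMax (3 * δ) hm ρ' S ε f) (ENNReal.ofReal q)
                (volume.restrict (Q0 n))) (hρ'mem)
      _ ≤ ⨆ (ρ : (Fin n → Fin m) → ℝ)
            (_ : ∀ z, ρ z ∈ Set.Icc (1 : ℝ) 2 ∧ ∃ t : ℤ, ρ z = 3 * δ * t)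
            (S : (Fin n → Fin m) → Finset (Fin n)) (_ : ∀ z, (S z).card = n - k)
            (ε : (Fin n → Fin m) → Fin n → Bool),
            eLpNorm (linMax (3 * δ) hm ρ S ε f) (ENNReal.ofReal q)
              (volume.restrict (Q0 n)) :=
          le_iSup (fun ρ : (Fin n → Fin m) → ℝ =>
            ⨆ (_ : ∀ z, ρ z ∈ Set.Icc (1 : ℝ) 2 ∧ ∃ t : ℤ, ρ z = 3 * δ * t)
              (S : (Fin n → Fin m) → Finset (Fin n)) (_ : ∀ z, (S z).card = n - k)
              (ε : (Fin n → Fin m) → Fin n → Bool),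
              eLpNorm (linMax (3 * δ) hm ρ S ε f) (ENNReal.ofReal q)
                (volume.restrict (Q0 n))) ρ'
  calc eLpNorm (skelMax n k δ f) (ENNReal.ofReal q) (volume.restrict (Q0 n))
      ≤ _ := hstep1
    _ = ENNReal.ofReal (15 ^ n) *
        eLpNorm (linMax (3 * δ) hm ρ' S' ε' f) (ENNReal.ofReal q)
          (volume.restrict (Q0 n)) := hstep2
    _ ≤ _ := mul_le_mul_right hstep3 _
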